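/- Let e be a unit vector in ℝⁿ and α ∈ (0, π/2). Let γ : J → ℝⁿ be Lipschitz on a compact interval J with γ'(s) ∈ C(e,α) for a.e. s ∈ J, where C(e,α) := { v : v·e ≥ cos(α)·|v| }. Then for every Borel set E ⊆ J, the 1-dimensional Hausdorff measure of γ(E) satisfies ℋ¹(γ(E)) ≤ (1/cos α) · ∫_E |γ'(s)| ds, and in particular for every Borel set F ⊆ ℝⁿ one has cos(α)·ℋ¹(γ(J) ∩ F) ≤ ∫_{γ⁻¹(F)} γ'(s)·e ds. -/

import Mathlib

open Metric Set MeasureTheory Filter Topology Function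
open scoped RealInnerProductSpace NNReal ENNReal



/-- A Lipschitz function on `[a,b]` with a.e. nonnegative derivative is monotone. -/
lemma aux_monotoneOn_of_ae_deriv_nonneg {a b : ℝ} {K : ℝ≥0} {f f' : ℝ → ℝ}
    (hf : LipschitzOnWith K f (Set.Icc a b))
    (h : ∀ᵐ u ∂(volume.restrict (Set.Icc a b)),
      HasDerivWithinAt f (f' u) (Set.Icc a b) u ∧ 0 ≤ f' u) :
    MonotoneOn f (Set.Icc a b) := by
  intro s hs t ht hst
  rcases hst.eq_or_lt with rfl | hst
  · exact le_rfl
  obtain ⟨F, hF, hFeq⟩ := hf.extend_real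
  have hFc : Continuous F := hF.continuous
  have hint : ∀ x y : ℝ, IntervalIntegrable F volume x y := fun x y =>
    hFc.intervalIntegrable x y
  set P : ℝ → ℝ := fun z => ∫ u in (0:ℝ)..z, F u with hPdef
  have hPd : ∀ x : ℝ, HasDerivAt P (F x) x := fun x =>
    intervalIntegral.integral_hasDerivAt_right (hint 0 x)
      hFc.stronglyMeasurable.stronglyMeasurableAtFilter hFc.continuousAt
  have hPdiff : ∀ x y : ℝ, ∫ u in x..y, F u = P y - P x := by
    intro x y
    have := intervalIntegral.integral_add_adjacent_intervals (hint 0 x) (hint x y)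
    simp only [hPdef] at this ⊢
    linarith
  set hn : ℕ → ℝ := fun n => 1 / (n + 1) with hhn
  have hnpos : ∀ n, 0 < hn n := fun n => by positivity
  have hn0 : Tendsto hn atTop (𝓝 0) := tendsto_one_div_add_atTop_nhds_zero_nat
  -- generic difference-quotient convergence along the sequence `x + hn n`
  have hslope : ∀ (Φ : ℝ → ℝ) (d x : ℝ), HasDerivAt Φ d x →
      Tendsto (fun n => (Φ (x + hn n) - Φ x) / hn n) atTop (𝓝 d) := by
    intro Φ d x hΦ
    have h1 : Tendsto (fun n => x + hn n) atTop (𝓝[≠] x) := by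
      apply tendsto_nhdsWithin_of_tendsto_nhds_of_eventually_within
      · simpa using tendsto_const_nhds.add hn0
      · exact Eventually.of_forall fun n => by
          simp only [mem_compl_iff, mem_singleton_iff]
          exact ne_of_gt (by linarith [hnpos n])
    have h2 := (hasDerivAt_iff_tendsto_slope.1 hΦ).comp h1
    have : (fun n => slope Φ x (x + hn n)) = fun n => (Φ (x + hn n) - Φ x) / hn n := by
      funext n
      rw [slope_def_field]
      congr 1
      ring
    rwa [Function.comp_def, this] at h2
  -- the identity
  have hAn : ∀ n, ∫ u in Set.Ioc s t, (F (u + hn n) - F u) / hn n =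
      (P (t + hn n) - P t) / hn n - (P (s + hn n) - P s) / hn n := by
    intro n
    rw [← intervalIntegral.integral_of_le hst.le, intervalIntegral.integral_div]
    have h3 : ∫ u in s..t, (F (u + hn n) - F u) =
        (P (t + hn n) - P (s + hn n)) - (P t - P s) := by
      have hi1 : IntervalIntegrable (fun u => F (u + hn n)) volume s t :=
        (hFc.comp (continuous_add_right (hn n))).intervalIntegrable _ _
      rw [intervalIntegral.integral_sub hi1 (hint s t),
        intervalIntegral.integral_comp_add_right, hPdiff, hPdiff]
    rw [h3]; ring
  -- dominated convergence
  have hsub : Set.Ioc s t ⊆ Set.Icc a b := fun u hu => ⟨hs.1.trans hu.1.le, hu.2.trans ht.2⟩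
  have h' : ∀ᵐ u ∂volume.restrict (Set.Ioc s t),
      HasDerivWithinAt f (f' u) (Set.Icc a b) u ∧ 0 ≤ f' u :=
    ae_mono (Measure.restrict_mono hsub le_rfl) h
  have hnet : ∀ᵐ u ∂volume.restrict (Set.Ioc s t), u ≠ t := by
    rw [ae_iff]
    have : {u : ℝ | ¬ u ≠ t} = {t} := by ext u; simp
    rw [this]
    exact le_antisymm ((Measure.restrict_le_self _).trans_eq (by simp)) zero_le
  have hmem : ∀ᵐ u ∂volume.restrict (Set.Ioc s t), u ∈ Set.Ioc s t :=
    ae_restrict_mem measurableSet_Ioc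
  have hDCT : Tendsto (fun n => ∫ u in Set.Ioc s t, (F (u + hn n) - F u) / hn n) atTop
      (𝓝 (∫ u in Set.Ioc s t, f' u)) := by
    apply MeasureTheory.tendsto_integral_of_dominated_convergence (fun _ => (K : ℝ))
    · intro n
      exact (((hFc.comp (continuous_id.add continuous_const)).sub hFc).div_const
        _).aestronglyMeasurable
    · exact integrable_const _
    · intro n
      refine Eventually.of_forall fun u => ?_
      have h4 := hF.dist_le_mul (u + hn n) u
      rw [Real.dist_eq, Real.dist_eq, add_sub_cancel_left, abs_of_pos (hnpos n)] at h4
      rw [Real.norm_eq_abs, abs_div, abs_of_pos (hnpos n), div_le_iff₀ (hnpos n)]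
      exact h4
    · filter_upwards [h', hnet, hmem] with u hu hut humem
      have huIoo : u ∈ Set.Ioo a b :=
        ⟨hs.1.trans_lt humem.1, lt_of_lt_of_le (lt_of_le_of_ne humem.2 hut) ht.2⟩
      have hnhds : Set.Icc a b ∈ 𝓝 u := Icc_mem_nhds huIoo.1 huIoo.2
      have hfd : HasDerivAt f (f' u) u := hu.1.hasDerivAt hnhds
      have hFd : HasDerivAt F (f' u) u :=
        hfd.congr_of_eventuallyEq (eventually_of_mem hnhds fun x hx => (hFeq hx).symm)
      exact hslope F (f' u) u hFd
  -- combine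
  have hlim2 : Tendsto (fun n => ∫ u in Set.Ioc s t, (F (u + hn n) - F u) / hn n) atTop
      (𝓝 (F t - F s)) := by
    simp only [hAn]
    exact (hslope P (F t) t (hPd t)).sub (hslope P (F s) s (hPd s))
  have hEq : F t - F s = ∫ u in Set.Ioc s t, f' u := tendsto_nhds_unique hlim2 hDCT
  have hnn : 0 ≤ ∫ u in Set.Ioc s t, f' u :=
    integral_nonneg_of_ae (h'.mono fun u hu => hu.2)
  have : F s ≤ F t := by linarith
  rwa [hFeq hs, hFeq ht]

/-- If `γ` is a Lipschitz path on a compact interval `J = [a,b]` whose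
derivative lies a.e. in the cone `C(e,α) = {v : v·e ≥ cos(α)·|v|}`, then for every Borel
`E ⊆ J` one has `ℋ¹(γ(E)) ≤ (1/cos α)·∫_E |γ'|`, and for every Borel set `F ⊆ ℝⁿ`,
`cos(α)·ℋ¹(γ(J) ∩ F) ≤ ∫_{γ⁻¹(F)} γ'·e`. -/
theorem stmt_11 {n : ℕ} (e : EuclideanSpace ℝ (Fin n)) (he : ‖e‖ = 1)
    (α : ℝ) (hα : α ∈ Set.Ioo 0 (Real.pi / 2)) (a b : ℝ) (hab : a ≤ b)
    (γ γ' : ℝ → EuclideanSpace ℝ (Fin n)) (L : NNReal)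
    (hγ : LipschitzOnWith L γ (Set.Icc a b))
    (hderiv : ∀ᵐ s ∂(volume.restrict (Set.Icc a b)),
      HasDerivWithinAt γ (γ' s) (Set.Icc a b) s ∧ Real.cos α * ‖γ' s‖ ≤ ⟪γ' s, e⟫) :
    (∀ E : Set ℝ, E ⊆ Set.Icc a b → MeasurableSet E →
      μH[1] (γ '' E) ≤ ENNReal.ofReal ((1 / Real.cos α) * ∫ s in E, ‖γ' s‖)) ∧
    (∀ F : Set (EuclideanSpace ℝ (Fin n)), MeasurableSet F →
      ENNReal.ofReal (Real.cos α) * μH[1] (γ '' Set.Icc a b ∩ F) ≤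
        ENNReal.ofReal (∫ s in Set.Icc a b ∩ γ ⁻¹' F, ⟪γ' s, e⟫)) := by
  obtain ⟨hα0, hαπ⟩ := hα
  set c := Real.cos α with hcdef
  have hcpos : 0 < c := Real.cos_pos_of_mem_Ioo ⟨by linarith [Real.pi_div_two_pos], hαπ⟩
  have hc1 : c ≤ 1 := Real.cos_le_one α
  set g : ℝ → ℝ := fun s => ⟪γ s, e⟫ with hgdef
  -- Fact 0
  have fact0 : ∀ E : Set ℝ, E ⊆ Set.Icc a b → μH[1] (γ '' E) ≤ (L : ℝ≥0∞) * volume E := by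
    intro E hE
    have h1 := (hγ.mono hE).hausdorffMeasure_image_le (zero_le_one (α := ℝ))
    have h2 : (μH[1] : Measure ℝ) E = volume E := by
      rw [MeasureTheory.hausdorffMeasure_real]
    rwa [ENNReal.rpow_one, h2] at h1
  -- bad set
  set Pp : ℝ → Prop := fun s =>
    HasDerivWithinAt γ (γ' s) (Set.Icc a b) s ∧ c * ‖γ' s‖ ≤ ⟪γ' s, e⟫ with hPdef
  have hZ0 : volume ({s | ¬ Pp s} ∩ Set.Icc a b) = 0 := by
    have h1 := hderiv
    rw [ae_iff, Measure.restrict_apply' measurableSet_Icc] at h1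
    exact h1
  set Z := toMeasurable volume ({s | ¬ Pp s} ∩ Set.Icc a b) with hZdef
  have hZm : MeasurableSet Z := measurableSet_toMeasurable _ _
  have hZ0' : volume Z = 0 := by rw [hZdef, measure_toMeasurable]; exact hZ0
  have hP : ∀ s ∈ Set.Icc a b, s ∉ Z → Pp s := fun s hs hsZ =>
    by_contra fun h => hsZ (subset_toMeasurable _ _ ⟨h, hs⟩)
  -- a.e. interior
  have hIoo : ∀ᵐ s ∂volume.restrict (Set.Icc a b), s ∈ Set.Ioo a b := by
    rw [ae_iff, Measure.restrict_apply' measurableSet_Icc]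
    refine measure_mono_null (fun s hs => ?_) (Set.Countable.measure_zero
      ((Set.countable_singleton a).insert b) _)
    obtain ⟨hs1, hs2, hs3⟩ : ¬(a < s ∧ s < b) ∧ a ≤ s ∧ s ≤ b := by
      simpa [Set.mem_Ioo] using hs
    rcases eq_or_lt_of_le hs2 with h | h
    · exact Or.inr h.symm
    · left
      rcases eq_or_lt_of_le hs3 with h' | h'
      · exact h'
      · exact absurd ⟨h, h'⟩ hs1
  -- integrability of γ'
  haveI : IsFiniteMeasure (volume.restrict (Set.Icc a b)) :=
    ⟨by rw [Measure.restrict_apply_univ]; exact measure_Icc_lt_top⟩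
  have hae_deriv : ∀ᵐ s ∂volume.restrict (Set.Icc a b), HasDerivAt γ (γ' s) s := by
    filter_upwards [hderiv, hIoo] with s hs hsI
    exact hs.1.hasDerivAt (Icc_mem_nhds hsI.1 hsI.2)
  have hγ'eq : γ' =ᵐ[volume.restrict (Set.Icc a b)] deriv γ := by
    filter_upwards [hae_deriv] with s hs using hs.deriv.symm
  have hmeasD : AEStronglyMeasurable γ' (volume.restrict (Set.Icc a b)) :=
    (aestronglyMeasurable_deriv γ _).congr hγ'eq.symm
  have hbound : ∀ᵐ s ∂volume.restrict (Set.Icc a b), ‖γ' s‖ ≤ (L : ℝ) := by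
    filter_upwards [hae_deriv, hIoo] with s hs hsI
    have h1 := hs.hasFDerivAt.le_of_lipschitzOn (Icc_mem_nhds hsI.1 hsI.2) hγ
    simpa [ContinuousLinearMap.norm_smulRight_apply] using h1
  have hintD : Integrable γ' (volume.restrict (Set.Icc a b)) :=
    Integrable.mono' (integrable_const (L : ℝ)) hmeasD
      (by filter_upwards [hbound] with s hs using hs)
  have hnorm_int : IntegrableOn (fun s => ‖γ' s‖) (Set.Icc a b) volume := hintD.norm
  have hinner_int : IntegrableOn (fun s => ⟪γ' s, e⟫) (Set.Icc a b) volume := by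
    refine Integrable.mono' hnorm_int (hmeasD.inner aestronglyMeasurable_const) ?_
    refine Eventually.of_forall fun s => ?_
    rw [Real.norm_eq_abs]
    calc |⟪γ' s, e⟫| ≤ ‖γ' s‖ * ‖e‖ := abs_real_inner_le_norm _ _
    _ = ‖γ' s‖ := by rw [he, mul_one]
  -- monotonicity of projections
  have mono_w : ∀ w : EuclideanSpace ℝ (Fin n), ‖w‖ ≤ 1 →
      MonotoneOn (fun r => ⟪γ r, e - c • w⟫) (Set.Icc a b) := by
    intro w hw
    have hnormw : ‖e - c • w‖ ≤ 2 := by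
      calc ‖e - c • w‖ ≤ ‖e‖ + ‖c • w‖ := norm_sub_le _ _
      _ = 1 + c * ‖w‖ := by rw [he, norm_smul, Real.norm_eq_abs, abs_of_nonneg hcpos.le]
      _ ≤ 2 := by nlinarith
    refine aux_monotoneOn_of_ae_deriv_nonneg (K := 2 * L)
      (f' := fun s => ⟪γ' s, e - c • w⟫) ?_ ?_
    · rw [lipschitzOnWith_iff_dist_le_mul]
      intro x hx y hy
      have h2 : dist (γ x) (γ y) ≤ (L : ℝ) * dist x y := hγ.dist_le_mul x hx y hy
      rw [Real.dist_eq]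
      have h3 : (fun r => ⟪γ r, e - c • w⟫) x - (fun r => ⟪γ r, e - c • w⟫) y
          = ⟪γ x - γ y, e - c • w⟫ := by rw [inner_sub_left]
      rw [h3]
      calc |⟪γ x - γ y, e - c • w⟫| ≤ ‖γ x - γ y‖ * ‖e - c • w‖ := abs_real_inner_le_norm _ _
      _ ≤ ((L : ℝ) * dist x y) * 2 := by
          refine mul_le_mul ?_ hnormw (norm_nonneg _) (by positivity)
          rwa [← dist_eq_norm]
      _ = ((2 * L : ℝ≥0) : ℝ) * dist x y := by push_cast; ring
    · filter_upwards [hderiv] with s hs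
      constructor
      · simpa using hs.1.inner (𝕜 := ℝ) (hasDerivWithinAt_const _ _ (e - c • w))
      · have h4 : ⟪γ' s, w⟫ ≤ ‖γ' s‖ := by
          calc ⟪γ' s, w⟫ ≤ ‖γ' s‖ * ‖w‖ := real_inner_le_norm _ _
          _ ≤ ‖γ' s‖ := mul_le_of_le_one_right (norm_nonneg _) hw
        have h5 : ⟪γ' s, e - c • w⟫ = ⟪γ' s, e⟫ - c * ⟪γ' s, w⟫ := by
          rw [inner_sub_right, real_inner_smul_right]
        rw [h5]
        nlinarith [hs.2]
  -- key comparison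
  have hkey : ∀ s ∈ Set.Icc a b, ∀ t ∈ Set.Icc a b, s ≤ t →
      c * ‖γ t - γ s‖ ≤ g t - g s := by
    intro s hs t ht hst
    by_cases hu : γ t - γ s = 0
    · have h6 := mono_w 0 (by simp) hs ht hst
      simp only [smul_zero, sub_zero] at h6
      rw [hu, norm_zero, mul_zero]
      simpa [hgdef] using sub_nonneg.2 h6
    · set u := γ t - γ s with hudef
      set w : EuclideanSpace ℝ (Fin n) := ‖u‖⁻¹ • u with hwdef
      have hun : ‖u‖ ≠ 0 := norm_ne_zero_iff.2 hu
      have hwnorm : ‖w‖ = 1 := by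
        rw [hwdef, norm_smul, Real.norm_eq_abs, abs_of_nonneg (by positivity)]
        field_simp
      have h7 := mono_w w hwnorm.le hs ht hst
      have h8 : (0:ℝ) ≤ ⟪u, e - c • w⟫ := by
        rw [hudef, inner_sub_left]
        simpa using sub_nonneg.2 h7
      have h9 : ⟪u, w⟫ = ‖u‖ := by
        rw [hwdef, real_inner_smul_right, real_inner_self_eq_norm_mul_norm]
        field_simp
      have h10 : ⟪u, e - c • w⟫ = ⟪u, e⟫ - c * ‖u‖ := by
        rw [inner_sub_right, real_inner_smul_right, h9]
      have h11 : g t - g s = ⟪u, e⟫ := by rw [hgdef, hudef]; simp [inner_sub_left]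
      rw [h11]
      rw [h10] at h8
      linarith
  have hcomp : ∀ x ∈ Set.Icc a b, ∀ y ∈ Set.Icc a b,
      c * dist (γ x) (γ y) ≤ dist (g x) (g y) := by
    have base : ∀ x ∈ Set.Icc a b, ∀ y ∈ Set.Icc a b, x ≤ y →
        c * dist (γ x) (γ y) ≤ dist (g x) (g y) := by
      intro x hx y hy hxy
      have h12 := hkey x hx y hy hxy
      rw [dist_eq_norm, norm_sub_rev, Real.dist_eq]
      have h13 : g y - g x ≤ |g x - g y| := by rw [abs_sub_comm]; exact le_abs_self _
      linarith
    intro x hx y hy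
    rcases le_total x y with h | h
    · exact base x hx y hy h
    · rw [dist_comm (γ x), dist_comm (g x)]; exact base y hy x hx h
  -- the central estimate
  have hmain : ∀ E : Set ℝ, E ⊆ Set.Icc a b → MeasurableSet E →
      μH[1] (γ '' E) ≤ ENNReal.ofReal ((1/c) * ∫ s in E, ⟪γ' s, e⟫) := by
    intro E hE hEm
    set E₁ := E \ Z with hE₁def
    have hE₁m : MeasurableSet E₁ := hEm.diff hZm
    have hE₁sub : E₁ ⊆ Set.Icc a b := fun x hx => hE hx.1
    have hsplit : μH[1] (γ '' E) ≤ μH[1] (γ '' E₁) + μH[1] (γ '' (E ∩ Z)) := by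
      refine (measure_mono ?_).trans (measure_union_le _ _)
      rw [← Set.image_union]
      apply Set.image_mono
      intro x hx
      by_cases hxZ : x ∈ Z
      · exact Or.inr ⟨hx, hxZ⟩
      · exact Or.inl ⟨hx, hxZ⟩
    have hnull : μH[1] (γ '' (E ∩ Z)) = 0 := by
      refine le_antisymm ?_ zero_le
      refine (fact0 _ (Set.inter_subset_left.trans hE)).trans ?_
      have h21 : volume (E ∩ Z) = 0 := measure_mono_null Set.inter_subset_right hZ0'
      rw [h21, mul_zero]
    set h : ℝ → EuclideanSpace ℝ (Fin n) := γ ∘ invFunOn g (Set.Icc a b) with hhdef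
    have hfix : ∀ x ∈ Set.Icc a b, h (g x) = γ x := by
      intro x hx
      have hex : ∃ y ∈ Set.Icc a b, g y = g x := ⟨x, hx, rfl⟩
      have hmem := invFunOn_mem hex
      have heq := invFunOn_eq hex
      have h14 := hcomp _ hmem x hx
      rw [heq] at h14
      simp only [dist_self] at h14
      have h15 : dist (γ (invFunOn g (Set.Icc a b) (g x))) (γ x) ≤ 0 := by
        nlinarith [dist_nonneg (x := γ (invFunOn g (Set.Icc a b) (g x))) (y := γ x)]
      have h15' := le_antisymm h15 dist_nonneg
      exact dist_eq_zero.1 h15'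
    have hhlip : LipschitzOnWith (Real.toNNReal (1/c)) h (g '' E₁) := by
      rw [lipschitzOnWith_iff_dist_le_mul]
      rintro y₁ ⟨x₁, hx₁, rfl⟩ y₂ ⟨x₂, hx₂, rfl⟩
      have hx₁I : x₁ ∈ Set.Icc a b := hE₁sub hx₁
      have hx₂I : x₂ ∈ Set.Icc a b := hE₁sub hx₂
      have hm₁ := invFunOn_mem (⟨x₁, hx₁I, rfl⟩ : ∃ y ∈ Set.Icc a b, g y = g x₁)
      have he₁ := invFunOn_eq (⟨x₁, hx₁I, rfl⟩ : ∃ y ∈ Set.Icc a b, g y = g x₁)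
      have hm₂ := invFunOn_mem (⟨x₂, hx₂I, rfl⟩ : ∃ y ∈ Set.Icc a b, g y = g x₂)
      have he₂ := invFunOn_eq (⟨x₂, hx₂I, rfl⟩ : ∃ y ∈ Set.Icc a b, g y = g x₂)
      have h16 := hcomp _ hm₁ _ hm₂
      rw [he₁, he₂] at h16
      rw [Real.coe_toNNReal _ (by positivity)]
      show dist (γ _) (γ _) ≤ (1/c) * dist (g x₁) (g x₂)
      rw [one_div_mul_eq_div, le_div_iff₀ hcpos]
      nlinarith
    have himg : γ '' E₁ = h '' (g '' E₁) := by
      apply Set.Subset.antisymm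
      · rintro _ ⟨x, hx, rfl⟩
        exact ⟨g x, Set.mem_image_of_mem _ hx, hfix x (hE₁sub hx)⟩
      · rintro _ ⟨_, ⟨x, hx, rfl⟩, rfl⟩
        rw [hfix x (hE₁sub hx)]
        exact Set.mem_image_of_mem _ hx
    have hμ1 : μH[1] (γ '' E₁) ≤ ENNReal.ofReal (1/c) * volume (g '' E₁) := by
      rw [himg]
      have h17 := hhlip.hausdorffMeasure_image_le (zero_le_one (α := ℝ))
      rw [ENNReal.rpow_one] at h17
      have h18 : (μH[1] : Measure ℝ) (g '' E₁) = volume (g '' E₁) := by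
        rw [MeasureTheory.hausdorffMeasure_real]
      rw [h18] at h17
      exact h17
    have hgderiv : ∀ x ∈ E₁, HasFDerivWithinAt g
        ((1 : ℝ →L[ℝ] ℝ).smulRight ⟪γ' x, e⟫) E₁ x := by
      intro x hx
      have hPx := hP x (hE₁sub hx) hx.2
      have h19 : HasDerivWithinAt g ⟪γ' x, e⟫ (Set.Icc a b) x := by
        simpa using hPx.1.inner (𝕜 := ℝ) (hasDerivWithinAt_const _ _ e)
      exact (h19.mono (fun y hy => hE₁sub hy)).hasFDerivWithinAt
    have hvol : volume (g '' E₁) ≤ ∫⁻ x in E₁, ENNReal.ofReal ⟪γ' x, e⟫ := by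
      have h20 := MeasureTheory.addHaar_image_le_lintegral_abs_det_fderiv volume hE₁m hgderiv
      refine h20.trans_eq ?_
      refine setLIntegral_congr_fun hE₁m (fun x hx => ?_)
      rw [ContinuousLinearMap.det_smulRight, ContinuousLinearMap.one_apply, one_mul, abs_of_nonneg]
      have h22 := (hP x (hE₁sub hx) hx.2).2
      nlinarith [norm_nonneg (γ' x)]
    have hlint : ∫⁻ x in E₁, ENNReal.ofReal ⟪γ' x, e⟫ =
        ENNReal.ofReal (∫ x in E₁, ⟪γ' x, e⟫) := by
      rw [← MeasureTheory.ofReal_integral_eq_lintegral_ofReal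
        (hinner_int.mono_set (fun y hy => hE₁sub hy)) ?_]
      filter_upwards [ae_restrict_mem hE₁m] with x hx
      have h23 := (hP x (hE₁sub hx) hx.2).2
      show (0:ℝ) ≤ ⟪γ' x, e⟫
      nlinarith [norm_nonneg (γ' x)]
    have hintE : ∫ x in E₁, ⟪γ' x, e⟫ = ∫ x in E, ⟪γ' x, e⟫ := by
      apply setIntegral_congr_set
      exact diff_ae_eq_self.2 (measure_mono_null Set.inter_subset_right hZ0')
    calc μH[1] (γ '' E) ≤ μH[1] (γ '' E₁) + μH[1] (γ '' (E ∩ Z)) := hsplit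
    _ = μH[1] (γ '' E₁) := by rw [hnull, add_zero]
    _ ≤ ENNReal.ofReal (1/c) * volume (g '' E₁) := hμ1
    _ ≤ ENNReal.ofReal (1/c) * ENNReal.ofReal (∫ x in E₁, ⟪γ' x, e⟫) := by
        rw [← hlint]; exact mul_le_mul_right hvol _
    _ = ENNReal.ofReal ((1/c) * ∫ s in E, ⟪γ' s, e⟫) := by
        rw [hintE, ← ENNReal.ofReal_mul (by positivity)]
  constructor
  · intro E hE hEm
    refine (hmain E hE hEm).trans ?_
    apply ENNReal.ofReal_le_ofReal
    refine mul_le_mul_of_nonneg_left ?_ (by positivity)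
    refine setIntegral_mono_on (hinner_int.mono_set hE) (hnorm_int.mono_set hE) hEm ?_
    intro x hx
    calc ⟪γ' x, e⟫ ≤ ‖γ' x‖ * ‖e‖ := real_inner_le_norm _ _
    _ = ‖γ' x‖ := by rw [he, mul_one]
  · intro F hF
    have hcont : ContinuousOn γ (Set.Icc a b) := hγ.continuousOn
    have hγ₀ : Continuous (Set.IccExtend hab ((Set.Icc a b).restrict γ)) :=
      hcont.restrict.Icc_extend'
    have hEm : MeasurableSet (Set.Icc a b ∩ γ ⁻¹' F) := by
      have hEeq : Set.Icc a b ∩ γ ⁻¹' F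
          = Set.Icc a b ∩ (Set.IccExtend hab ((Set.Icc a b).restrict γ)) ⁻¹' F := by
        ext x
        simp only [Set.mem_inter_iff, Set.mem_preimage, and_congr_right_iff]
        intro hx
        rw [Set.IccExtend_of_mem hab _ hx]
        rfl
      rw [hEeq]
      exact measurableSet_Icc.inter (hγ₀.measurable hF)
    have himg2 : γ '' Set.Icc a b ∩ F = γ '' (Set.Icc a b ∩ γ ⁻¹' F) :=
      (Set.image_inter_preimage _ _ _).symm
    rw [himg2]
    refine le_trans (mul_le_mul_right
      (hmain (Set.Icc a b ∩ γ ⁻¹' F) Set.inter_subset_left hEm) _) ?_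
    rw [← ENNReal.ofReal_mul hcpos.le]
    rw [show c * ((1/c) * ∫ s in Set.Icc a b ∩ γ ⁻¹' F, ⟪γ' s, e⟫)
        = ∫ s in Set.Icc a b ∩ γ ⁻¹' F, ⟪γ' s, e⟫ by field_simp]
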